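/- Assume the syzygy graph G_I contains no cycle of length 3. Then every edge of G_I is a face of the Scarf complex Δ_I; explicitly, if u_i and u_j are adjacent in G_I and σ ⊆ {1,…,m} satisfies ⋃_{r∈σ} F(u_r) = F(u_i) ∪ F(u_j), then σ = {i, j}. -/

import Mathlib

open MvPolynomial Finset

attribute [local instance] Classical.propDecidable

/-- The (first linear) syzygy graph of a squarefree monomial ideal whose generators
have supports `F i`, all of cardinality `d`: vertices are the generators, and two
generators are adjacent iff their supports meet in `d - 1` elements (equivalently,
there are variables `x, y` with `x * u i = y * u j`). -/
def syzGraph {n m : ℕ} (F : Fin m → Finset (Fin n)) (d : ℕ) : SimpleGraph (Fin m) where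
  Adj i j := i ≠ j ∧ (F i ∩ F j).card + 1 = d
  symm := by
    constructor
    intro i j h
    exact ⟨h.1.symm, by rw [Finset.inter_comm]; exact h.2⟩
  loopless := by constructor; intro i h; exact h.1 rfl

/-- The map `φ : S^ι → S`, `e i ↦ u i`. -/
noncomputable def phi {R : Type*} [CommRing R] {ι : Type*} [Fintype ι] (u : ι → R) :
    (ι → R) →ₗ[R] R where
  toFun c := ∑ i, c i * u i
  map_add' a b := by simp [add_mul, Finset.sum_add_distrib]
  map_smul' r a := by simp [Finset.mul_sum, mul_assoc]

/-- The set of linear syzygies `x_a e_i - x_b e_j` with `x_a u_i = x_b u_j`. -/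
def linSyz {k : Type*} [Field k] {n : ℕ} {ι : Type*} [DecidableEq ι]
    (u : ι → MvPolynomial (Fin n) k) : Set (ι → MvPolynomial (Fin n) k) :=
  { w | ∃ (i j : ι) (a b : Fin n), X a * u i = X b * u j ∧
      w = Pi.single i (X a) - Pi.single j (X b) }

/-- `I = (u i : i)` has linear relations: `ker φ` is generated by the linear syzygies. -/
def HasLinRel {k : Type*} [Field k] {n : ℕ} {ι : Type*} [Fintype ι] [DecidableEq ι]
    (u : ι → MvPolynomial (Fin n) k) : Prop :=
  Submodule.span (MvPolynomial (Fin n) k) (linSyz u) = LinearMap.ker (phi u)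

/-- `I = (u 1, …, u m)` has linear quotients: for some ordering of the generators, each
colon ideal `(u_{σ 1}, …, u_{σ (i-1)}) : u_{σ i}` is generated by a subset of the variables. -/
def LinQuot {k : Type*} [Field k] {n m : ℕ} (u : Fin m → MvPolynomial (Fin n) k) : Prop :=
  ∃ σ : Equiv.Perm (Fin m), ∀ i : Fin m, i.val ≠ 0 →
    ∃ T : Set (Fin n),
      Submodule.colon (Ideal.span ((fun j => u (σ j)) '' {j : Fin m | j < i}))
        (Ideal.span {u (σ i)}) = Ideal.span (X '' T)

/-- Variable-decomposability of a monomial ideal given by its (finite) minimal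
generating set `G`: either `G` is a singleton (principal ideal), or there is a shedding
variable `x l` such that both `I_{x l}` and `I^{x l}` are variable-decomposable. -/
inductive VarDecomp {k : Type*} [Field k] {n : ℕ} :
    Finset (MvPolynomial (Fin n) k) → Prop
  | principal (u : MvPolynomial (Fin n) k) : VarDecomp {u}
  | shed (G : Finset (MvPolynomial (Fin n) k)) (l : Fin n)
      (hne : (G.filter fun u => ¬ X l ∣ u).Nonempty)
      (hshed : ∀ u ∈ G.filter (fun u => ¬ X l ∣ u),
        ∃ v ∈ G.filter (fun u => X l ∣ u),
          Submodule.colon (Ideal.span {v}) (Ideal.span {u}) = Ideal.span {X l})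
      (h1 : VarDecomp (G.filter fun u => ¬ X l ∣ u))
      (h2 : VarDecomp (G.filter fun u => X l ∣ u)) : VarDecomp G

/-- Suppose `G_I` has no cycle of length 3 (is triangle-free). Then every
edge of `G_I` is a face of the Scarf complex `Δ_I`: if `u i` and `u j` are adjacent and
`σ ⊆ {0,…,m-1}` satisfies `⋃_{r ∈ σ} F r = F i ∪ F j` (i.e. `lcm_σ = lcm_{i,j}`), then
`σ = {i, j}`. -/
theorem stmt13 {k : Type*} [Field k] {n m d : ℕ}
    (F : Fin m → Finset (Fin n)) (hinj : Function.Injective F)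
    (hcard : ∀ i, (F i).card = d)
    (hc3 : (syzGraph F d).CliqueFree 3) :
    ∀ i j : Fin m, (syzGraph F d).Adj i j →
      ∀ σ : Finset (Fin m), σ.biUnion F = F i ∪ F j → σ = {i, j} := by
  intro i j hadj σ hσ
  obtain ⟨hne, hinter⟩ := hadj
  set U := F i ∪ F j with hUdef
  have hUcard : U.card = d + 1 := by
    have h := Finset.card_union_add_card_inter (F i) (F j)
    rw [hcard, hcard] at h
    rw [hUdef]
    omega
  have hsub : ∀ r ∈ σ, F r ⊆ U := by
    intro r hr
    rw [← hσ]
    exact Finset.subset_biUnion_of_mem F hr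
  have hadj2 : ∀ a b : Fin m, F a ⊆ U → F b ⊆ U → a ≠ b → (syzGraph F d).Adj a b := by
    intro a b ha hb hab
    refine ⟨hab, ?_⟩
    have hne' : ¬ F b ⊆ F a := fun h =>
      hab (hinj (Finset.eq_of_subset_of_card_le h (by rw [hcard, hcard])).symm)
    have hss : F a ⊂ F a ∪ F b := by
      refine ⟨Finset.subset_union_left, fun h => hne' ?_⟩
      exact (Finset.union_subset_iff.mp h).2
    have h3 : d < (F a ∪ F b).card := by
      have := Finset.card_lt_card hss
      rwa [hcard] at this
    have h2 : (F a ∪ F b).card ≤ d + 1 :=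
      le_trans (Finset.card_le_card (Finset.union_subset ha hb)) (le_of_eq hUcard)
    have h := Finset.card_union_add_card_inter (F a) (F b)
    rw [hcard, hcard] at h
    omega
  have hFi : F i ⊆ U := Finset.subset_union_left
  have hFj : F j ⊆ U := Finset.subset_union_right
  have hσsub : σ ⊆ {i, j} := by
    intro r hr
    by_contra hrij
    simp only [Finset.mem_insert, Finset.mem_singleton, not_or] at hrij
    obtain ⟨hri, hrj⟩ := hrij
    exact hc3 {i, j, r} (SimpleGraph.is3Clique_triple_iff.mpr
      ⟨⟨hne, hinter⟩, hadj2 i r hFi (hsub r hr) (Ne.symm hri),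
        hadj2 j r hFj (hsub r hr) (Ne.symm hrj)⟩)
  have hmem : ∀ a b : Fin m, a ≠ b → ∃ x, x ∈ F b ∧ x ∉ F a := by
    intro a b hab
    by_contra h
    push_neg at h
    exact hab (hinj (Finset.eq_of_subset_of_card_le h (by rw [hcard, hcard]))).symm
  have hjσ : j ∈ σ := by
    obtain ⟨x, hxj, hxi⟩ := hmem i j hne
    have : x ∈ σ.biUnion F := by rw [hσ]; exact Finset.mem_union_right _ hxj
    obtain ⟨r, hrσ, hxr⟩ := Finset.mem_biUnion.mp this
    rcases Finset.mem_insert.mp (hσsub hrσ) with h | h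
    · exact absurd (h ▸ hxr) hxi
    · exact (Finset.mem_singleton.mp h) ▸ hrσ
  have hiσ : i ∈ σ := by
    obtain ⟨x, hxi, hxj⟩ := hmem j i (Ne.symm hne)
    have : x ∈ σ.biUnion F := by rw [hσ]; exact Finset.mem_union_left _ hxi
    obtain ⟨r, hrσ, hxr⟩ := Finset.mem_biUnion.mp this
    rcases Finset.mem_insert.mp (hσsub hrσ) with h | h
    · exact h ▸ hrσ
    · exact absurd ((Finset.mem_singleton.mp h) ▸ hxr) hxj
  exact Finset.Subset.antisymm hσsub
    (Finset.insert_subset_iff.mpr ⟨hiσ, Finset.singleton_subset_iff.mpr hjσ⟩)
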